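/- Let n be a positive integer and let f : ℝⁿ → ℝⁿ be a real analytic open map. If f is not a local homeomorphism at a point p ∈ ℝⁿ (i.e., p belongs to the branch set B of f), then the rank of the derivative df_p is at most n − 2. In other words, B ⊆ R_{n−2}. -/

import Mathlib

open Set Metric Module


lemma open_subset_Iic_absurd {O : Set ℝ} {M : ℝ} (hO : IsOpen O) (hsub : O ⊆ Set.Iic M)
    (hM : M ∈ O) : False := by
  obtain ⟨ε, hε, hb⟩ := Metric.isOpen_iff.mp hO M hM
  have h1 : M + ε / 2 ∈ O := hb (by
    simp only [mem_ball, Real.dist_eq]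
    rw [abs_of_nonneg (by linarith)]
    linarith)
  have := hsub h1
  simp only [Set.mem_Iic] at this
  linarith

lemma open_subset_Ici_absurd {O : Set ℝ} {M : ℝ} (hO : IsOpen O) (hsub : O ⊆ Set.Ici M)
    (hM : M ∈ O) : False := by
  obtain ⟨ε, hε, hb⟩ := Metric.isOpen_iff.mp hO M hM
  have h1 : M - ε / 2 ∈ O := hb (by
    simp only [mem_ball, Real.dist_eq]
    rw [abs_of_nonpos (by linarith)]
    linarith)
  have := hsub h1
  simp only [Set.mem_Ici] at this
  linarith

lemma not_isOpen_image_Ioo {k : ℝ → ℝ} {s t : ℝ} (hst : s < t)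
    (hk : ContinuousOn k (Set.Icc s t)) (he : k s = k t) :
    ¬ IsOpen (k '' Set.Ioo s t) := by
  intro ho
  have hne : (Set.Icc s t).Nonempty := Set.nonempty_Icc.mpr hst.le
  obtain ⟨c, hc, hcmax⟩ := isCompact_Icc.exists_isMaxOn hne hk
  obtain ⟨c', hc', hcmin⟩ := isCompact_Icc.exists_isMinOn hne hk
  have hmax : ∀ x ∈ Set.Icc s t, k x ≤ k c := fun x hx => hcmax hx
  have hmin : ∀ x ∈ Set.Icc s t, k c' ≤ k x := fun x hx => hcmin hx
  have hIooIcc : Set.Ioo s t ⊆ Set.Icc s t := Set.Ioo_subset_Icc_self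
  by_cases h1 : k s < k c
  · -- max attained in the interior
    have hcIoo : c ∈ Set.Ioo s t := by
      rcases hc with ⟨hcs, hct⟩
      constructor
      · rcases lt_or_eq_of_le hcs with h | h
        · exact h
        · exact absurd (h ▸ rfl : k s = k c) (by intro hh; rw [← hh] at h1; exact lt_irrefl _ h1)
      · rcases lt_or_eq_of_le hct with h | h
        · exact h
        · exfalso; rw [h] at h1; rw [← he] at h1; exact lt_irrefl _ h1
    exact open_subset_Iic_absurd ho
      (by rintro z ⟨x, hx, rfl⟩; exact hmax x (hIooIcc hx)) ⟨c, hcIoo, rfl⟩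
  · push_neg at h1
    by_cases h2 : k c' < k s
    · have hcIoo : c' ∈ Set.Ioo s t := by
        rcases hc' with ⟨hcs, hct⟩
        constructor
        · rcases lt_or_eq_of_le hcs with h | h
          · exact h
          · exfalso; rw [← h] at h2; exact lt_irrefl _ h2
        · rcases lt_or_eq_of_le hct with h | h
          · exact h
          · exfalso; rw [h, ← he] at h2; exact lt_irrefl _ h2
      exact open_subset_Ici_absurd ho
        (by rintro z ⟨x, hx, rfl⟩; exact hmin x (hIooIcc hx)) ⟨c', hcIoo, rfl⟩
    · push_neg at h2
      -- k is constant equal to k s on Ioo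
      have hconst : ∀ x ∈ Set.Ioo s t, k x = k s := by
        intro x hx
        have l1 := hmax x (hIooIcc hx)
        have l2 := hmin x (hIooIcc hx)
        linarith
      have hmid : (s + t) / 2 ∈ Set.Ioo s t := ⟨by linarith, by linarith⟩
      refine open_subset_Iic_absurd ho ?_ ⟨(s + t) / 2, hmid, hconst _ hmid⟩
      rintro z ⟨x, hx, rfl⟩
      exact Set.mem_Iic.mpr (le_of_eq (hconst x hx))


lemma exists_partialHomeomorph_of_injOn {X Y : Type*} [TopologicalSpace X] [TopologicalSpace Y]
    [Nonempty X] {f : X → Y} (hc : Continuous f) (ho : IsOpenMap f) {N : Set X} (hN : IsOpen N)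
    (hinj : Set.InjOn f N) : ∃ e : OpenPartialHomeomorph X Y, e.source = N ∧ f = e := by
  have hcinv : ContinuousOn (Function.invFunOn f N) (f '' N) := by
    rw [_root_.continuousOn_iff']
    intro U hU
    refine ⟨f '' (U ∩ N), ho _ (hU.inter hN), ?_⟩
    ext y
    constructor
    · rintro ⟨hgU, x, hxN, rfl⟩
      have hgx : Function.invFunOn f N (f x) = x := hinj.leftInvOn_invFunOn hxN
      rw [Set.mem_preimage, hgx] at hgU
      exact ⟨⟨x, ⟨hgU, hxN⟩, rfl⟩, ⟨x, hxN, rfl⟩⟩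
    · rintro ⟨⟨x, ⟨hxU, hxN⟩, rfl⟩, -⟩
      have hgx : Function.invFunOn f N (f x) = x := hinj.leftInvOn_invFunOn hxN
      exact ⟨by rw [Set.mem_preimage, hgx]; exact hxU, ⟨x, hxN, rfl⟩⟩
  exact ⟨{ toPartialEquiv := hinj.toPartialEquiv f N
           open_source := hN
           open_target := ho N hN
           continuousOn_toFun := hc.continuousOn
           continuousOn_invFun := hcinv }, rfl, rfl⟩


lemma exists_compl_vector {E : Type*} [NormedAddCommGroup E] [InnerProductSpace ℝ E]
    [FiniteDimensional ℝ E] {m : ℕ} (hdim : Module.finrank ℝ E = m + 1)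
    (S : E →ₗ[ℝ] (Fin m → ℝ)) (hS : Function.Surjective S) :
    ∃ v : E, v ≠ 0 ∧ S v = 0 ∧
      Function.Bijective (fun x => (S x, (innerSL ℝ v) x) : E → (Fin m → ℝ) × ℝ) := by
  have hrank : finrank ℝ (LinearMap.range S) = m := by
    rw [LinearMap.range_eq_top.mpr hS, finrank_top]
    simp
  have hker : finrank ℝ (LinearMap.ker S) = 1 := by
    have := LinearMap.finrank_range_add_finrank_ker S
    omega
  have hkerne : LinearMap.ker S ≠ ⊥ := by
    intro h
    rw [h] at hker
    simp at hker
  obtain ⟨v, hvker, hv0⟩ := Submodule.exists_mem_ne_zero_of_ne_bot hkerne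
  have hspan : (ℝ ∙ v) = LinearMap.ker S := by
    apply Submodule.eq_of_le_of_finrank_eq
    · rwa [Submodule.span_singleton_le_iff_mem]
    · rw [finrank_span_singleton hv0, hker]
  refine ⟨v, hv0, hvker, ?_⟩
  set SL : E →ₗ[ℝ] (Fin m → ℝ) × ℝ := S.prod (innerSL ℝ v : E →L[ℝ] ℝ) with hSL
  have hinj : Function.Injective SL := by
    rw [← LinearMap.ker_eq_bot, Submodule.eq_bot_iff]
    intro x hx
    rw [LinearMap.mem_ker] at hx
    have h1 : S x = 0 := congrArg Prod.fst hx
    have h2 : (innerSL ℝ v) x = 0 := congrArg Prod.snd hx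
    have hxker : x ∈ LinearMap.ker S := LinearMap.mem_ker.mpr h1
    rw [← hspan, Submodule.mem_span_singleton] at hxker
    obtain ⟨c, rfl⟩ := hxker
    simp only [innerSL_apply_apply, real_inner_smul_right] at h2
    rcases mul_eq_zero.mp h2 with h | h
    · rw [h, zero_smul]
    · exact absurd (inner_self_eq_zero.mp h) hv0
  have hbij : Function.Bijective SL := by
    refine ⟨hinj, ?_⟩
    rw [← LinearMap.injective_iff_surjective_of_finrank_eq_finrank ?_]
    · exact hinj
    · rw [hdim, Module.finrank_prod]
      simp
  exact hbij

/-- **Theorem B(iii) (Hirsch).** For a real analytic open map `f : ℝⁿ → ℝⁿ`,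
the branch set is contained in `R_{n-2}`: at any point `p` where `f` is not a
local homeomorphism, the rank of the derivative `df_p` is at most `n - 2`. -/
theorem branch_set_subset_rank_le_sub_two
    {n : ℕ} (hn : 0 < n)
    (f : EuclideanSpace ℝ (Fin n) → EuclideanSpace ℝ (Fin n))
    (hf : ∀ p, AnalyticAt ℝ f p) (hopen : IsOpenMap f)
    (p : EuclideanSpace ℝ (Fin n)) (hp : ¬ IsLocalHomeomorphOn f {p}) :
    (Module.finrank ℝ (LinearMap.range (fderiv ℝ f p : EuclideanSpace ℝ (Fin n) →ₗ[ℝ] EuclideanSpace ℝ (Fin n))) : ℤ) ≤ (n : ℤ) - 2 := by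
  by_contra hcon
  push_neg at hcon
  obtain ⟨m, rfl⟩ : ∃ m, n = m + 1 := ⟨n - 1, (Nat.succ_pred_eq_of_pos hn).symm⟩
  set T : EuclideanSpace ℝ (Fin (m + 1)) →L[ℝ] EuclideanSpace ℝ (Fin (m + 1)) :=
    fderiv ℝ f p with hT
  have hm : m ≤ finrank ℝ (LinearMap.range (T : EuclideanSpace ℝ (Fin (m + 1)) →ₗ[ℝ] EuclideanSpace ℝ (Fin (m + 1)))) := by
    have := hcon
    push_cast at this
    omega
  -- choose m linearly independent vectors in the range of T
  set V : Submodule ℝ (EuclideanSpace ℝ (Fin (m + 1))) := LinearMap.range (T : EuclideanSpace ℝ (Fin (m + 1)) →ₗ[ℝ] EuclideanSpace ℝ (Fin (m + 1))) with hV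
  let bV := Module.finBasis ℝ V
  let u : Fin m → EuclideanSpace ℝ (Fin (m + 1)) := fun i => (bV (Fin.castLE hm i) : EuclideanSpace ℝ (Fin (m + 1)))
  have hu : LinearIndependent ℝ u := by
    have h1 := bV.linearIndependent.comp (Fin.castLE hm) (Fin.castLE_injective hm)
    exact h1.map' V.subtype (Submodule.ker_subtype V)
  have huV : ∀ i, u i ∈ V := fun i => (bV (Fin.castLE hm i)).2
  have hspanne : Submodule.span ℝ (Set.range u) ≠ ⊤ := by
    intro h
    have h2 := finrank_span_eq_card hu
    rw [h, finrank_top, finrank_euclideanSpace_fin] at h2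
    simp at h2
  obtain ⟨w, hw⟩ : ∃ w, w ∉ Submodule.span ℝ (Set.range u) := by
    by_contra h
    push_neg at h
    exact hspanne (Submodule.eq_top_iff'.mpr h)
  have hli : LinearIndependent ℝ (Fin.snoc u w : Fin (m + 1) → EuclideanSpace ℝ (Fin (m + 1))) :=
    linearIndependent_fin_snoc.mpr ⟨hu, hw⟩
  have hcard : Fintype.card (Fin (m + 1)) = finrank ℝ (EuclideanSpace ℝ (Fin (m + 1))) := by
    simp [finrank_euclideanSpace_fin]
  let B := basisOfLinearIndependentOfCardEqFinrank hli hcard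
  have hB : ⇑B = Fin.snoc u w := coe_basisOfLinearIndependentOfCardEqFinrank hli hcard
  let Alin : EuclideanSpace ℝ (Fin (m + 1)) →ₗ[ℝ] (Fin m → ℝ) := LinearMap.pi fun i => B.coord (Fin.castSucc i)
  let A : EuclideanSpace ℝ (Fin (m + 1)) →L[ℝ] (Fin m → ℝ) := LinearMap.toContinuousLinearMap Alin
  have hAu : ∀ i, Alin (u i) = Pi.single i 1 := by
    intro i
    funext j
    have h1 : u i = B (Fin.castSucc i) := by
      rw [hB, Fin.snoc_castSucc]
    simp only [Alin, LinearMap.pi_apply, Basis.coord_apply, h1, Basis.repr_self]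
    rw [Finsupp.single_apply, Pi.single_apply]
    by_cases h : i = j
    · simp [h]
    · rw [if_neg (by simpa [Fin.castSucc_inj] using h), if_neg (by simp [eq_comm, h])]
  have hST : Function.Surjective (Alin ∘ₗ (T : EuclideanSpace ℝ (Fin (m + 1)) →ₗ[ℝ] EuclideanSpace ℝ (Fin (m + 1)))) := by
    intro y
    choose xu hxu using fun i => LinearMap.mem_range.mp (huV i)
    refine ⟨∑ i, y i • xu i, ?_⟩
    simp only [LinearMap.comp_apply, map_sum, map_smul, ContinuousLinearMap.coe_coe, hxu, hAu]
    funext j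
    simp [Finset.sum_apply, Pi.single_apply]
  have hdimE : finrank ℝ (EuclideanSpace ℝ (Fin (m + 1))) = m + 1 := finrank_euclideanSpace_fin
  obtain ⟨v, hv0, hvker, hMbij⟩ := exists_compl_vector hdimE (Alin ∘ₗ (T : EuclideanSpace ℝ (Fin (m + 1)) →ₗ[ℝ] EuclideanSpace ℝ (Fin (m + 1)))) hST
  have hAsurj : Function.Surjective Alin := by
    intro y
    obtain ⟨x, hx⟩ := hST y
    exact ⟨T x, hx⟩
  obtain ⟨u₀, hu₀0, hu₀ker, hPsibij⟩ := exists_compl_vector hdimE Alin hAsurj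
  set P := (Fin m → ℝ) × ℝ with hPdef
  -- the codomain linear homeomorphism ψ
  let Psilin : EuclideanSpace ℝ (Fin (m + 1)) →ₗ[ℝ] P := Alin.prod ((innerSL ℝ u₀ : EuclideanSpace ℝ (Fin (m + 1)) →L[ℝ] ℝ) : EuclideanSpace ℝ (Fin (m + 1)) →ₗ[ℝ] ℝ)
  have hPsibij' : Function.Bijective Psilin := hPsibij
  let Psi : EuclideanSpace ℝ (Fin (m + 1)) ≃L[ℝ] P := (LinearEquiv.ofBijective Psilin hPsibij').toContinuousLinearEquiv
  let ψh : EuclideanSpace ℝ (Fin (m + 1)) ≃ₜ P := Psi.toHomeomorph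
  -- the domain chart φ
  let φ : EuclideanSpace ℝ (Fin (m + 1)) → P := fun x => (A (f x), (innerSL ℝ v) x)
  let Mclm : EuclideanSpace ℝ (Fin (m + 1)) →L[ℝ] P := (A.comp T).prod (innerSL ℝ v)
  have hMbij' : Function.Bijective Mclm := hMbij
  let Φ : EuclideanSpace ℝ (Fin (m + 1)) ≃L[ℝ] P :=
    (LinearEquiv.ofBijective (Mclm : EuclideanSpace ℝ (Fin (m + 1)) →ₗ[ℝ] P)
      hMbij').toContinuousLinearEquiv
  have hΦM : (Φ : EuclideanSpace ℝ (Fin (m + 1)) →L[ℝ] P) = Mclm := by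
    apply ContinuousLinearMap.coe_injective
    rfl
  have hfd : HasFDerivAt f T p := (hf p).differentiableAt.hasFDerivAt
  have hφd : HasFDerivAt φ (Φ : EuclideanSpace ℝ (Fin (m + 1)) →L[ℝ] P) p := by
    rw [hΦM]
    exact (A.hasFDerivAt.comp p hfd).prodMk (innerSL ℝ v).hasFDerivAt
  have hφcd : ContDiffAt ℝ 1 φ p := by
    have h1 : ContDiffAt ℝ 1 f p := (hf p).contDiffAt
    exact (A.contDiff.comp_contDiffAt p h1).prodMk ((innerSL ℝ v).contDiff.contDiffAt)
  let φt := hφcd.toOpenPartialHomeomorph φ hφd one_ne_zero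
  have hps : p ∈ φt.source := hφcd.mem_toOpenPartialHomeomorph_source hφd one_ne_zero
  have hpt : φ p ∈ φt.target := φt.map_source hps
  obtain ⟨r, hr, hball⟩ := Metric.isOpen_iff.mp φt.open_target (φ p) hpt
  set a := (φ p).1 with ha
  set b := (φ p).2 with hb
  set Bb : Set P := Metric.ball (φ p) r with hBb
  have hBprod : Bb = Metric.ball a r ×ˢ Metric.ball b r := by
    rw [hBb, ball_prod_same]
  have hBsub : Bb ⊆ φt.target := hball
  -- the map g = ψ ∘ f ∘ φ⁻¹ and its properties
  let g : P → P := fun q => ψh (f (φt.symm q))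
  have hfc : Continuous f := continuous_iff_continuousAt.mpr fun x => (hf x).continuousAt
  have hgc : ContinuousOn g φt.target :=
    (ψh.continuous.comp hfc).comp_continuousOn φt.continuousOn_symm
  have hgraph : ∀ q ∈ φt.target, (g q).1 = q.1 := by
    intro q hq
    have h1 : φ (φt.symm q) = q := φt.right_inv hq
    calc (g q).1 = (φ (φt.symm q)).1 := rfl
    _ = q.1 := by rw [h1]
  have hgopen : ∀ W, W ⊆ φt.target → IsOpen W → IsOpen (g '' W) := by
    intro W hWsub hWopen
    have h1 : g '' W = ψh '' (f '' (φt.symm '' W)) := by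
      rw [← Set.image_comp, ← Set.image_comp]
      rfl
    rw [h1]
    refine ψh.isOpenMap _ (hopen _ ?_)
    exact φt.symm.isOpen_image_of_subset_source hWopen (by rw [φt.symm_source]; exact hWsub)
  -- g is injective on the ball Bb
  have hginj : Set.InjOn g Bb := by
    have key : ∀ (y : Fin m → ℝ) (s t : ℝ), s < t → (y, s) ∈ Bb → (y, t) ∈ Bb →
        g (y, s) = g (y, t) → False := by
      intro y s t hst hs ht hgst
      have hyball : y ∈ Metric.ball a r := (hBprod ▸ hs).1
      have hsball : s ∈ Metric.ball b r := (hBprod ▸ hs).2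
      have htball : t ∈ Metric.ball b r := (hBprod ▸ ht).2
      have hIccball : Set.Icc s t ⊆ Metric.ball b r := by
        rw [Real.ball_eq_Ioo] at hsball htball ⊢
        intro τ hτ
        exact ⟨lt_of_lt_of_le hsball.1 hτ.1, lt_of_le_of_lt hτ.2 htball.2⟩
      have hmem : ∀ τ ∈ Set.Icc s t, (y, τ) ∈ Bb := by
        intro τ hτ
        rw [hBprod]
        exact ⟨hyball, hIccball hτ⟩
      set k : ℝ → ℝ := fun τ => (g (y, τ)).2 with hk
      have hkc : ContinuousOn k (Set.Icc s t) := by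
        have h2 : ContinuousOn (fun τ : ℝ => g (y, τ)) (Set.Icc s t) := by
          apply hgc.comp (Continuous.continuousOn (continuous_const.prodMk continuous_id))
          intro τ hτ
          exact hBsub (hmem τ hτ)
        exact continuous_snd.comp_continuousOn h2
      have hks : k s = k t := congrArg Prod.snd hgst
      set W : Set P := Metric.ball a r ×ˢ Set.Ioo s t with hW
      have hWsub : W ⊆ Bb := by
        rw [hBprod]
        apply Set.prod_mono_right
        intro τ hτ
        exact hIccball (Set.Ioo_subset_Icc_self hτ)
      have hWopen : IsOpen W := isOpen_ball.prod isOpen_Ioo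
      have hgW : IsOpen (g '' W) := hgopen W (hWsub.trans hBsub) hWopen
      have hSopen : IsOpen {z : ℝ | (y, z) ∈ g '' W} :=
        hgW.preimage (continuous_const.prodMk continuous_id : Continuous fun z : ℝ => (y, z))
      have hSeq : {z : ℝ | (y, z) ∈ g '' W} = k '' Set.Ioo s t := by
        ext z
        constructor
        · rintro ⟨⟨y', τ⟩, hmemW, hgz⟩
          have h2 : (g (y', τ)).1 = y' := hgraph _ (hBsub (hWsub hmemW))
          rw [hgz] at h2
          refine ⟨τ, hmemW.2, ?_⟩
          have hy' : y' = y := h2.symm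
          show (g (y, τ)).2 = z
          rw [← hy', hgz]
        · rintro ⟨τ, hτ, rfl⟩
          refine ⟨(y, τ), ⟨hyball, hτ⟩, ?_⟩
          apply Prod.ext
          · exact hgraph (y, τ) (hBsub (hWsub ⟨hyball, hτ⟩))
          · rfl
      exact not_isOpen_image_Ioo hst hkc hks (hSeq ▸ hSopen)
    rintro ⟨y₁, s⟩ hq₁ ⟨y₂, t⟩ hq₂ hg
    have h1 : y₁ = y₂ := by
      have e1 := hgraph (y₁, s) (hBsub hq₁)
      have e2 := hgraph (y₂, t) (hBsub hq₂)
      rw [hg] at e1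
      rw [e2] at e1
      exact e1.symm
    subst h1
    rcases lt_trichotomy s t with h | h | h
    · exact (key y₁ s t h hq₁ hq₂ hg).elim
    · rw [h]
    · exact (key y₁ t s h hq₂ hq₁ hg.symm).elim
  -- f is injective on N
  have hφc : Continuous φ := (A.continuous.comp hfc).prodMk (innerSL ℝ v).continuous
  set N := φt.source ∩ φ ⁻¹' Bb with hN
  have hNopen : IsOpen N := φt.open_source.inter (isOpen_ball.preimage hφc)
  have hpN : p ∈ N := ⟨hps, Metric.mem_ball_self hr⟩
  have hfinj : Set.InjOn f N := by
    intro x₁ hx₁ x₂ hx₂ hfx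
    have e₁ : φt.symm (φ x₁) = x₁ := φt.left_inv hx₁.1
    have e₂ : φt.symm (φ x₂) = x₂ := φt.left_inv hx₂.1
    have hg12 : g (φ x₁) = g (φ x₂) := by
      show ψh (f (φt.symm (φ x₁))) = ψh (f (φt.symm (φ x₂)))
      rw [e₁, e₂, hfx]
    have h3 : φ x₁ = φ x₂ := hginj hx₁.2 hx₂.2 hg12
    exact φt.injOn hx₁.1 hx₂.1 h3
  obtain ⟨e, hes, hef⟩ := exists_partialHomeomorph_of_injOn hfc hopen hNopen hfinj
  refine hp fun x hx => ?_
  rw [Set.mem_singleton_iff] at hx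
  subst hx
  exact ⟨e, hes ▸ hpN, hef⟩
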